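/- For composition matrices A, B in S(α,β) = {X ∈ ℝ^{n×p} : X·1_p = 1_n, α/p ≤ X_{ij} ≤ β/p}, the sum of row-wise Kullback–Leibler divergences D(A,B) = Σ_{i,j} A_{ij} log(A_{ij}/B_{ij}) satisfies (α p)/(2β²) · ‖A−B‖_F² ≤ D(A,B) ≤ (β p)/(2α²) · ‖A−B‖_F². -/

import Mathlib

open Finset

noncomputable def Faux (x : ℝ) : ℝ := x * Real.log x - (3/2)*x + 2 - (2*x)⁻¹
noncomputable def Gaux (x : ℝ) : ℝ := x^2/2 - x * Real.log x - 1/2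

lemma Faux_one : Faux 1 = 0 := by norm_num [Faux]
lemma Gaux_one : Gaux 1 = 0 := by norm_num [Gaux]

lemma log_lb {t : ℝ} (ht : 0 < t) : 1 - t⁻¹ ≤ Real.log t := by
  have h := Real.log_le_sub_one_of_pos (inv_pos.mpr ht)
  rw [Real.log_inv] at h
  linarith

lemma Faux_deriv {x : ℝ} (hx : 0 < x) :
    HasDerivAt Faux (Real.log x - 1/2 + (2*x^2)⁻¹) x := by
  have h1 : HasDerivAt (fun y : ℝ => y * Real.log y) (Real.log x + 1) x := by
    have := (hasDerivAt_id x).mul (Real.hasDerivAt_log hx.ne')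
    exact this.congr_deriv (by simp [hx.ne'])
  have h2 : HasDerivAt (fun y : ℝ => (2*y)⁻¹) (-(2) / (2*x)^2) x := by
    have h3 : HasDerivAt (fun y : ℝ => 2*y) 2 x := by
      simpa using (hasDerivAt_id x).const_mul (2:ℝ)
    exact h3.inv (by positivity)
  have h4 := ((h1.sub ((hasDerivAt_id x).const_mul (3/2:ℝ))).add_const 2).sub h2
  exact h4.congr_deriv (by field_simp; ring)

lemma Gaux_deriv {x : ℝ} (hx : 0 < x) :
    HasDerivAt Gaux (x - Real.log x - 1) x := by
  have h1 : HasDerivAt (fun y : ℝ => y * Real.log y) (Real.log x + 1) x := by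
    have := (hasDerivAt_id x).mul (Real.hasDerivAt_log hx.ne')
    exact this.congr_deriv (by simp [hx.ne'])
  have h2 : HasDerivAt (fun y : ℝ => y^2/2) x x := by
    have := (hasDerivAt_pow 2 x).div_const 2
    simpa using this
  have h4 := (h2.sub h1).sub_const (1/2)
  exact h4.congr_deriv (by ring)

lemma Fmono : MonotoneOn Faux (Set.Ioi 0) := by
  have hdiff : ∀ x ∈ Set.Ioi (0:ℝ), HasDerivAt Faux (Real.log x - 1/2 + (2*x^2)⁻¹) x :=
    fun x hx => Faux_deriv hx
  apply monotoneOn_of_deriv_nonneg (convex_Ioi 0)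
  · exact fun x hx => (hdiff x hx).differentiableAt.continuousAt.continuousWithinAt
  · rw [interior_Ioi]
    exact fun x hx => (hdiff x hx).differentiableAt.differentiableWithinAt
  · rw [interior_Ioi]
    intro x hx
    rw [(hdiff x hx).deriv]
    have hx2 : (0:ℝ) < x^2 := pow_pos (Set.mem_Ioi.mp hx) 2
    have h := log_lb hx2
    have hlog : Real.log (x^2) = 2 * Real.log x := by
      rw [Real.log_pow]; push_cast; ring
    rw [hlog] at h
    have e : (2*x^2)⁻¹ = (x^2)⁻¹ / 2 := by
      rw [mul_inv]; ring
    rw [e]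
    linarith

lemma Gmono : MonotoneOn Gaux (Set.Ioi 0) := by
  have hdiff : ∀ x ∈ Set.Ioi (0:ℝ), HasDerivAt Gaux (x - Real.log x - 1) x :=
    fun x hx => Gaux_deriv hx
  apply monotoneOn_of_deriv_nonneg (convex_Ioi 0)
  · exact fun x hx => (hdiff x hx).differentiableAt.continuousAt.continuousWithinAt
  · rw [interior_Ioi]
    exact fun x hx => (hdiff x hx).differentiableAt.differentiableWithinAt
  · rw [interior_Ioi]
    intro x hx
    rw [(hdiff x hx).deriv]
    have := Real.log_le_sub_one_of_pos hx
    linarith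

lemma pointwise {m M a b : ℝ} (hm : 0 < m) (ham : m ≤ a) (haM : a ≤ M)
    (hbm : m ≤ b) (hbM : b ≤ M) :
    (a - b)^2 / (2*M) ≤ a * Real.log (a/b) - a + b ∧
    a * Real.log (a/b) - a + b ≤ (a - b)^2 / (2*m) := by
  have ha : 0 < a := lt_of_lt_of_le hm ham
  have hb : 0 < b := lt_of_lt_of_le hm hbm
  have hM : 0 < M := lt_of_lt_of_le ha haM
  have hx : (0:ℝ) < a/b := by positivity
  set L := Real.log (a/b) with hL
  rcases le_total b a with hba | hab
  · -- a/b ≥ 1 : P ≥ 0, Q ≥ 0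
    have hx1 : (1:ℝ) ≤ a/b := (one_le_div hb).mpr hba
    have hF := Fmono (Set.mem_Ioi.mpr one_pos) (Set.mem_Ioi.mpr hx) hx1
    have hG := Gmono (Set.mem_Ioi.mpr one_pos) (Set.mem_Ioi.mpr hx) hx1
    rw [Faux_one, Faux] at hF
    rw [Gaux_one, Gaux] at hG
    have hP : 0 ≤ 2*a^2*L - 3*a^2 + 4*a*b - b^2 := by
      have h2 := mul_nonneg (show (0:ℝ) ≤ 2*a*b by positivity) hF
      have e : 2*a*b * (a/b * Real.log (a/b) - 3/2*(a/b) + 2 - (2*(a/b))⁻¹)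
          = 2*a^2*L - 3*a^2 + 4*a*b - b^2 := by
        rw [hL]; field_simp; ring
      linarith [e ▸ h2]
    have hQ : 0 ≤ a^2 - 2*a*b*L - b^2 := by
      have h2 := mul_nonneg (show (0:ℝ) ≤ 2*b^2 by positivity) hG
      have e : 2*b^2 * ((a/b)^2/2 - a/b * Real.log (a/b) - 1/2)
          = a^2 - 2*a*b*L - b^2 := by
        rw [hL]; field_simp
      linarith [e ▸ h2]
    constructor
    · have h3 : (a-b)^2/(2*a) ≤ a*L - a + b := by
        rw [div_le_iff₀ (by positivity)]; nlinarith [hP]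
      have h4 : (a-b)^2/(2*M) ≤ (a-b)^2/(2*a) := by
        apply div_le_div_of_nonneg_left (by positivity) (by positivity) (by linarith)
      linarith
    · have h3 : a*L - a + b ≤ (a-b)^2/(2*b) := by
        rw [le_div_iff₀ (by positivity)]; nlinarith [hQ]
      have h4 : (a-b)^2/(2*b) ≤ (a-b)^2/(2*m) := by
        apply div_le_div_of_nonneg_left (by positivity) (by positivity) (by linarith)
      linarith
  · -- a/b ≤ 1 : P ≤ 0, Q ≤ 0
    have hx1 : a/b ≤ 1 := (div_le_one hb).mpr hab
    have hF := Fmono (Set.mem_Ioi.mpr hx) (Set.mem_Ioi.mpr one_pos) hx1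
    have hG := Gmono (Set.mem_Ioi.mpr hx) (Set.mem_Ioi.mpr one_pos) hx1
    rw [Faux_one, Faux] at hF
    rw [Gaux_one, Gaux] at hG
    have hP : 2*a^2*L - 3*a^2 + 4*a*b - b^2 ≤ 0 := by
      have h2 := mul_nonpos_of_nonneg_of_nonpos (show (0:ℝ) ≤ 2*a*b by positivity) hF
      have e : 2*a*b * (a/b * Real.log (a/b) - 3/2*(a/b) + 2 - (2*(a/b))⁻¹)
          = 2*a^2*L - 3*a^2 + 4*a*b - b^2 := by
        rw [hL]; field_simp; ring
      linarith [e ▸ h2]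
    have hQ : a^2 - 2*a*b*L - b^2 ≤ 0 := by
      have h2 := mul_nonpos_of_nonneg_of_nonpos (show (0:ℝ) ≤ 2*b^2 by positivity) hG
      have e : 2*b^2 * ((a/b)^2/2 - a/b * Real.log (a/b) - 1/2)
          = a^2 - 2*a*b*L - b^2 := by
        rw [hL]; field_simp
      linarith [e ▸ h2]
    constructor
    · have h3 : (a-b)^2/(2*b) ≤ a*L - a + b := by
        rw [div_le_iff₀ (by positivity)]; nlinarith [hQ]
      have h4 : (a-b)^2/(2*M) ≤ (a-b)^2/(2*b) := by
        apply div_le_div_of_nonneg_left (by positivity) (by positivity) (by linarith)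
      linarith
    · have h3 : a*L - a + b ≤ (a-b)^2/(2*a) := by
        rw [le_div_iff₀ (by positivity)]; nlinarith [hP]
      have h4 : (a-b)^2/(2*a) ≤ (a-b)^2/(2*m) := by
        apply div_le_div_of_nonneg_left (by positivity) (by positivity) (by linarith)
      linarith

/-- **KL–Frobenius comparison for composition matrices.**
For `A, B ∈ S(α,β)` (rows sum to 1, entries in `[α/p, β/p]`),
`(αp)/(2β²)·‖A−B‖_F² ≤ D(A,B) ≤ (βp)/(2α²)·‖A−B‖_F²`. -/
theorem stmt0 {n p : ℕ} (hp : 0 < p) (α β : ℝ) (hα : 0 < α) (hαβ : α ≤ β)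
    (A B : Matrix (Fin n) (Fin p) ℝ)
    (hA1 : ∀ i, ∑ j, A i j = 1) (hA2 : ∀ i j, α / p ≤ A i j ∧ A i j ≤ β / p)
    (hB1 : ∀ i, ∑ j, B i j = 1) (hB2 : ∀ i j, α / p ≤ B i j ∧ B i j ≤ β / p) :
    α * p / (2 * β ^ 2) * (∑ i, ∑ j, (A i j - B i j) ^ 2)
      ≤ (∑ i, ∑ j, A i j * Real.log (A i j / B i j)) ∧
    (∑ i, ∑ j, A i j * Real.log (A i j / B i j))
      ≤ β * p / (2 * α ^ 2) * (∑ i, ∑ j, (A i j - B i j) ^ 2) := by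
  have hp' : (0:ℝ) < p := by exact_mod_cast hp
  have hβ : 0 < β := lt_of_lt_of_le hα hαβ
  have hm : (0:ℝ) < α / p := by positivity
  have key : ∀ i j, (A i j - B i j)^2/(2*(β/p)) ≤
        A i j * Real.log (A i j / B i j) - A i j + B i j
      ∧ A i j * Real.log (A i j / B i j) - A i j + B i j ≤ (A i j - B i j)^2/(2*(α/p)) :=
    fun i j => pointwise hm (hA2 i j).1 (hA2 i j).2 (hB2 i j).1 (hB2 i j).2
  have hD : (∑ i, ∑ j, A i j * Real.log (A i j / B i j))
      = ∑ i, ∑ j, (A i j * Real.log (A i j / B i j) - A i j + B i j) := by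
    refine Finset.sum_congr rfl fun i _ => ?_
    rw [Finset.sum_add_distrib, Finset.sum_sub_distrib, hA1 i, hB1 i]
    ring
  set S := ∑ i, ∑ j, (A i j - B i j) ^ 2 with hSdef
  have hS : 0 ≤ S := by positivity
  constructor
  · rw [hD]
    have h1 : ∑ i, ∑ j, (A i j - B i j)^2/(2*(β/(p:ℝ)))
        ≤ ∑ i, ∑ j, (A i j * Real.log (A i j / B i j) - A i j + B i j) :=
      Finset.sum_le_sum fun i _ => Finset.sum_le_sum fun j _ => (key i j).1
    have h2 : ∑ i, ∑ j, (A i j - B i j)^2/(2*(β/(p:ℝ))) = S / (2*(β/p)) := by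
      rw [hSdef]; simp only [← Finset.sum_div]
    have h3 : α * p / (2 * β ^ 2) * S ≤ S / (2*(β/(p:ℝ))) := by
      have hc : α * (p:ℝ) / (2 * β ^ 2) ≤ 1 / (2*(β/(p:ℝ))) := by
        rw [div_le_div_iff₀ (by positivity) (by positivity)]
        have e2 : α * (p:ℝ) * (2 * (β / (p:ℝ))) = 2*(α*β) := by
          field_simp
        rw [e2]
        nlinarith
      calc α * (p:ℝ) / (2 * β ^ 2) * S ≤ (1 / (2*(β/(p:ℝ)))) * S :=
            mul_le_mul_of_nonneg_right hc hS
        _ = S / (2*(β/(p:ℝ))) := by ring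
    linarith [h2 ▸ h1]
  · rw [hD]
    have h1 : ∑ i, ∑ j, (A i j * Real.log (A i j / B i j) - A i j + B i j)
        ≤ ∑ i, ∑ j, (A i j - B i j)^2/(2*(α/(p:ℝ))) :=
      Finset.sum_le_sum fun i _ => Finset.sum_le_sum fun j _ => (key i j).2
    have h2 : ∑ i, ∑ j, (A i j - B i j)^2/(2*(α/(p:ℝ))) = S / (2*(α/p)) := by
      rw [hSdef]; simp only [← Finset.sum_div]
    have h3 : S / (2*(α/(p:ℝ))) ≤ β * p / (2 * α ^ 2) * S := by
      have hc : 1 / (2*(α/(p:ℝ))) ≤ β * (p:ℝ) / (2 * α ^ 2) := by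
        rw [div_le_div_iff₀ (by positivity) (by positivity)]
        have e2 : β * (p:ℝ) * (2 * (α / (p:ℝ))) = 2*(α*β) := by
          field_simp
        rw [e2]
        nlinarith
      calc S / (2*(α/(p:ℝ))) = (1 / (2*(α/(p:ℝ)))) * S := by ring
        _ ≤ β * (p:ℝ) / (2 * α ^ 2) * S := mul_le_mul_of_nonneg_right hc hS
    linarith [h2 ▸ h1]
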